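/- Let n ≥ 1 be an integer, ε > 0, and let x, y ∈ ℝⁿ satisfy 0 < ‖x − y‖ ≤ 2ε. Set θ = arccos(‖x − y‖/(2ε)). Then the Lebesgue measure of B_ε(x) ∪ B_ε(y) equals V_n(ε) + 2ε · V_{n-1}(ε) · ∫_{θ}^{π/2} sinⁿ t dt, where V_n(ε) and V_{n-1}(ε) denote the Lebesgue measures of the closed balls of radius ε in ℝⁿ and ℝ^{n-1} respectively, and B_ε(x) denotes the closed ball of radius ε around x. -/

import Mathlib

open MeasureTheory Real

section Aux

open Metric

lemma tube_subst (m : ℕ) (ε d : ℝ) (hε : 0 < ε) (hd0 : 0 ≤ d) (hd : d ≤ 2 * ε) :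
    ∫ s in (0:ℝ)..(d/2), Real.sqrt (ε^2 - s^2) ^ m
      = ε^(m+1) * ∫ t in Real.arccos (d/(2*ε))..(π/2), Real.sin t ^ (m+1) := by
  set θ := Real.arccos (d/(2*ε)) with hθ
  have h2ε : (0:ℝ) < 2 * ε := by linarith
  have hq0 : 0 ≤ d / (2*ε) := div_nonneg hd0 h2ε.le
  have hq1 : d / (2*ε) ≤ 1 := (div_le_one h2ε).mpr hd
  have hθ2 : θ ≤ π / 2 := Real.arccos_le_pi_div_two.mpr hq0
  have hθ0 : 0 ≤ θ := Real.arccos_nonneg _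
  have hcosθ : Real.cos θ = d / (2*ε) := Real.cos_arccos (by linarith) hq1
  have hg : Continuous fun u : ℝ => Real.sqrt (ε^2 - u^2) ^ m :=
    ((continuous_const.sub (continuous_pow 2)).sqrt).pow m
  have key : ∫ t in θ..(π/2), (-(ε * Real.sin t)) • ((fun u => Real.sqrt (ε^2 - u^2) ^ m) ∘ (fun t => ε * Real.cos t)) t
      = ∫ u in (ε * Real.cos θ)..(ε * Real.cos (π/2)), Real.sqrt (ε^2 - u^2) ^ m := by
    apply intervalIntegral.integral_comp_smul_deriv (f := fun t => ε * Real.cos t)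
      (f' := fun t => -(ε * Real.sin t))
    · intro t _
      simpa [mul_comm, neg_mul, mul_neg] using ((Real.hasDerivAt_cos t).const_mul ε)
    · exact (continuous_const.mul continuous_sin).neg.continuousOn
    · exact hg
  rw [Real.cos_pi_div_two, mul_zero, hcosθ] at key
  have hεd : ε * (d / (2*ε)) = d / 2 := by field_simp
  rw [hεd] at key
  have hL : ∫ t in θ..(π/2), (-(ε * Real.sin t)) • ((fun u => Real.sqrt (ε^2 - u^2) ^ m) ∘ (fun t => ε * Real.cos t)) t
      = ∫ t in θ..(π/2), -(ε^(m+1) * Real.sin t ^ (m+1)) := by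
    apply intervalIntegral.integral_congr
    intro t ht
    rw [Set.uIcc_of_le (by linarith)] at ht
    have hsin : 0 ≤ Real.sin t := Real.sin_nonneg_of_nonneg_of_le_pi (le_trans hθ0 ht.1)
      (le_trans ht.2 (by linarith [Real.pi_pos]))
    have : Real.sqrt (ε^2 - (ε * Real.cos t)^2) = ε * Real.sin t := by
      have : ε^2 - (ε * Real.cos t)^2 = (ε * Real.sin t)^2 := by
        have := Real.sin_sq_add_cos_sq t
        ring_nf
        nlinarith [Real.sin_sq_add_cos_sq t]
      rw [this, Real.sqrt_sq (by positivity)]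
    simp only [smul_eq_mul, Function.comp_apply, this]
    ring
  rw [hL, intervalIntegral.integral_neg, intervalIntegral.integral_const_mul] at key
  rw [intervalIntegral.integral_symm, ← key, neg_neg]


lemma vol_union_aux (m : ℕ) (hm : 1 ≤ m) (ε d : ℝ) (hε : 0 < ε) (hd : 0 ≤ d) :
    volume (Metric.closedBall (0 : EuclideanSpace ℝ (Fin (m+1))) ε ∪
        Metric.closedBall (EuclideanSpace.single (0 : Fin (m+1)) d) ε)
      = ENNReal.ofReal (2 * ∫ s in (-ε)..(d/2), Real.sqrt (ε^2 - s^2) ^ m)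
          * volume (Metric.closedBall (0 : EuclideanSpace ℝ (Fin m)) 1) := by
  classical
  set c := volume (Metric.closedBall (0 : EuclideanSpace ℝ (Fin m)) 1) with hc
  set F : ℝ → ℝ := fun s => Real.sqrt (ε^2 - min (s^2) ((s-d)^2)) ^ m with hFdef
  set G : ℝ → ℝ := fun s => Real.sqrt (ε^2 - s^2) ^ m with hGdef
  have hGc : Continuous G := ((continuous_const.sub (continuous_pow 2)).sqrt).pow m
  have hFc : Continuous F := by
    apply Continuous.pow
    apply Continuous.sqrt
    exact continuous_const.sub ((continuous_pow 2).min ((continuous_id.sub continuous_const).pow 2))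
  -- measure preserving maps
  have hφ := EuclideanSpace.volume_preserving_symm_measurableEquiv_toLp (Fin (m+1))
  have hψ := MeasureTheory.volume_preserving_piFinSuccAbove (fun _ : Fin (m+1) => ℝ) 0
  have hcomp : MeasurePreserving
      (fun z : EuclideanSpace ℝ (Fin (m+1)) =>
        MeasurableEquiv.piFinSuccAbove (fun _ : Fin (m+1) => ℝ) 0
          ((MeasurableEquiv.toLp 2 (Fin (m+1) → ℝ)).symm z)) volume volume := hψ.comp hφ
  set T : Set (ℝ × (Fin m → ℝ)) :=
    {p | p.1^2 + ∑ i, p.2 i ^ 2 ≤ ε^2 ∨ (p.1 - d)^2 + ∑ i, p.2 i ^ 2 ≤ ε^2} with hTdef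
  have hsumc : Continuous fun p : ℝ × (Fin m → ℝ) => ∑ i, p.2 i ^ 2 :=
    continuous_finset_sum _ fun i _ => ((continuous_apply i).comp continuous_snd).pow 2
  have hTmeas : MeasurableSet T := by
    apply MeasurableSet.union
    · exact (isClosed_le (((continuous_fst.pow 2).add hsumc)) continuous_const).measurableSet
    · exact (isClosed_le ((((continuous_fst.sub continuous_const).pow 2)).add hsumc)
        continuous_const).measurableSet
  have hpre : Metric.closedBall (0 : EuclideanSpace ℝ (Fin (m+1))) ε ∪
        Metric.closedBall (EuclideanSpace.single (0 : Fin (m+1)) d) ε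
      = (fun z : EuclideanSpace ℝ (Fin (m+1)) =>
          MeasurableEquiv.piFinSuccAbove (fun _ : Fin (m+1) => ℝ) 0
            ((MeasurableEquiv.toLp 2 (Fin (m+1) → ℝ)).symm z)) ⁻¹' T := by
    ext z
    have hdist0 : dist z 0 = Real.sqrt (∑ i, (z i)^2) := by
      rw [EuclideanSpace.dist_eq]
      congr 1
      refine Finset.sum_congr rfl fun i _ => ?_
      rw [Real.dist_eq, sq_abs]
      norm_num
    have hdist1 : dist z (EuclideanSpace.single (0 : Fin (m+1)) d)
        = Real.sqrt ((z 0 - d)^2 + ∑ i : Fin m, (z i.succ)^2) := by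
      rw [EuclideanSpace.dist_eq]
      congr 1
      rw [Fin.sum_univ_succ]
      congr 1
      · rw [Real.dist_eq, sq_abs, EuclideanSpace.single_apply, if_pos rfl]
      · refine Finset.sum_congr rfl fun i _ => ?_
        rw [Real.dist_eq, sq_abs, EuclideanSpace.single_apply, if_neg (Fin.succ_ne_zero i), sub_zero]
    simp only [Set.mem_union, Metric.mem_closedBall, Set.mem_preimage, hTdef, Set.mem_setOf_eq,
      hdist0, hdist1, MeasurableEquiv.piFinSuccAbove_apply, Fin.insertNthEquiv_symm_apply, Fin.removeNth, Fin.zero_succAbove]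
    rw [Real.sqrt_le_left hε.le, Real.sqrt_le_left hε.le]
    have : ((MeasurableEquiv.toLp 2 (Fin (m+1) → ℝ)).symm) z = (z : Fin (m+1) → ℝ) := rfl
    rw [this, Fin.sum_univ_succ]
  rw [hpre, hcomp.measure_preimage hTmeas.nullMeasurableSet]
  have hslice : ∀ s : ℝ, (volume : Measure (Fin m → ℝ)) (Prod.mk s ⁻¹' T)
      = ENNReal.ofReal (F s) * c := by
    intro s
    have hcond : ∀ w : Fin m → ℝ,
        (s^2 + ∑ i, w i ^ 2 ≤ ε^2 ∨ (s-d)^2 + ∑ i, w i ^ 2 ≤ ε^2)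
          ↔ ∑ i, w i ^ 2 ≤ ε^2 - min (s^2) ((s-d)^2) := by
      intro w
      rcases le_total (s^2) ((s-d)^2) with h | h
      · rw [min_eq_left h]
        constructor
        · rintro (h1 | h1) <;> linarith
        · intro h1; left; linarith
      · rw [min_eq_right h]
        constructor
        · rintro (h1 | h1) <;> linarith
        · intro h1; right; linarith
    by_cases hA : 0 ≤ ε^2 - min (s^2) ((s-d)^2)
    · have hset : ((MeasurableEquiv.toLp 2 (Fin m → ℝ)).symm) ⁻¹' (Prod.mk s ⁻¹' T)
          = Metric.closedBall (0 : EuclideanSpace ℝ (Fin m))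
              (Real.sqrt (ε^2 - min (s^2) ((s-d)^2))) := by
        ext w
        have hw : dist w (0 : EuclideanSpace ℝ (Fin m)) = Real.sqrt (∑ i, (w i)^2) := by
          rw [EuclideanSpace.dist_eq]
          congr 1
          refine Finset.sum_congr rfl fun i _ => ?_
          rw [Real.dist_eq, sq_abs]
          norm_num
        simp only [Set.mem_preimage, hTdef, Set.mem_setOf_eq, Metric.mem_closedBall, hw]
        have hww : ((MeasurableEquiv.toLp 2 (Fin m → ℝ)).symm) w = (w : Fin m → ℝ) := rfl
        rw [hww, hcond w, Real.sqrt_le_sqrt_iff hA]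
      have h1 : (volume : Measure (Fin m → ℝ)) (Prod.mk s ⁻¹' T)
          = volume (((MeasurableEquiv.toLp 2 (Fin m → ℝ)).symm) ⁻¹' (Prod.mk s ⁻¹' T)) :=
        ((EuclideanSpace.volume_preserving_symm_measurableEquiv_toLp (Fin m)).measure_preimage
          (hTmeas.preimage measurable_prodMk_left).nullMeasurableSet).symm
      rw [h1, hset, Measure.addHaar_closedBall' volume _ (Real.sqrt_nonneg _),
        finrank_euclideanSpace_fin]
    · have hempty : Prod.mk s ⁻¹' T = ∅ := by
        ext w
        simp only [Set.mem_preimage, hTdef, Set.mem_setOf_eq, Set.mem_empty_iff_false, iff_false]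
        intro hcon
        have h2 := (hcond w).mp hcon
        have h3 : 0 ≤ ∑ i, w i ^ 2 := Finset.sum_nonneg fun i _ => sq_nonneg _
        push_neg at hA
        linarith
      have hF0 : F s = 0 := by
        push_neg at hA
        simp only [hFdef]
        rw [Real.sqrt_eq_zero'.mpr (by linarith), zero_pow (by omega)]
      rw [hempty, measure_empty, hF0]
      simp
  rw [MeasureTheory.Measure.volume_eq_prod, Measure.prod_apply hTmeas, lintegral_congr hslice,
    lintegral_mul_const _ (hFc.measurable.ennreal_ofReal)]
  -- integrability and support of F
  have hFzero : ∀ s : ℝ, s ≤ -ε ∨ d + ε ≤ s → F s = 0 := by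
    intro s hs
    have hmin : ε^2 ≤ min (s^2) ((s-d)^2) := by
      rcases hs with hs | hs
      · exact le_min (by nlinarith) (by nlinarith)
      · exact le_min (by nlinarith) (by nlinarith)
    simp only [hFdef]
    rw [Real.sqrt_eq_zero'.mpr (by linarith), zero_pow (by omega)]
  have hsupp : Function.support F ⊆ Set.Ioc (-ε) (d+ε) := by
    intro s hs
    by_contra hcon
    simp only [Set.mem_Ioc, not_and_or, not_lt, not_le] at hcon
    refine hs (hFzero s ?_)
    rcases hcon with h | h
    · exact Or.inl h
    · exact Or.inr h.le
  have hFsupp : HasCompactSupport F :=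
    HasCompactSupport.intro (isCompact_Icc (a := -ε) (b := d+ε))
      (fun s hs => by
        apply hFzero
        simp only [Set.mem_Icc, not_and_or, not_le] at hs
        rcases hs with h | h
        · left; linarith
        · right; linarith)
  have hFi : Integrable F := hFc.integrable_of_hasCompactSupport hFsupp
  rw [← ofReal_integral_eq_lintegral_ofReal hFi
    (Filter.Eventually.of_forall fun s => by simp only [hFdef]; positivity)]
  -- the real integral computation
  have hGint : ∀ a b : ℝ, IntervalIntegrable G volume a b := fun a b => hGc.intervalIntegrable a b
  have hFint : ∀ a b : ℝ, IntervalIntegrable F volume a b := fun a b => hFc.intervalIntegrable a b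
  have hIF : ∫ s, F s = 2 * ∫ s in (-ε)..(d/2), G s := by
    rw [← intervalIntegral.integral_eq_integral_of_support_subset hsupp,
      ← intervalIntegral.integral_add_adjacent_intervals (a := -ε) (b := d/2) (c := d+ε)
        (hFint _ _) (hFint _ _)]
    have hpiece1 : ∫ s in (-ε)..(d/2), F s = ∫ s in (-ε)..(d/2), G s := by
      apply intervalIntegral.integral_congr
      intro s hs
      rw [Set.uIcc_of_le (by linarith)] at hs
      simp only [hFdef, hGdef]
      rw [min_eq_left (by nlinarith [hs.2])]
    have hpiece2 : ∫ s in (d/2)..(d+ε), F s = ∫ s in (-ε)..(d/2), G s := by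
      have e1 : ∫ s in (d/2)..(d+ε), F s = ∫ s in (d/2)..(d+ε), G (s - d) := by
        apply intervalIntegral.integral_congr
        intro s hs
        rw [Set.uIcc_of_le (by linarith)] at hs
        simp only [hFdef, hGdef]
        rw [min_eq_right (by nlinarith [hs.1])]
      rw [e1, intervalIntegral.integral_comp_sub_right (fun s => G s) d]
      have e2 : d/2 - d = -(d/2) := by ring
      have e3 : d + ε - d = ε := by ring
      rw [e2, e3]
      have e4 : ∫ s in (-ε)..(d/2), G s = ∫ s in (-ε)..(d/2), G (-s) := by
        apply intervalIntegral.integral_congr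
        intro s _
        simp only [hGdef, neg_sq]
      rw [e4, intervalIntegral.integral_comp_neg (fun s => G s), neg_neg]
    rw [hpiece1, hpiece2]
    ring
  rw [hIF]

lemma vol_union_reduce (m : ℕ) (ε : ℝ) (x y : EuclideanSpace ℝ (Fin (m+1))) :
    volume (Metric.closedBall x ε ∪ Metric.closedBall y ε)
      = volume (Metric.closedBall (0 : EuclideanSpace ℝ (Fin (m+1))) ε ∪
          Metric.closedBall (EuclideanSpace.single (0 : Fin (m+1)) ‖x - y‖) ε) := by
  set v : EuclideanSpace ℝ (Fin (m+1)) := EuclideanSpace.single (0 : Fin (m+1)) ‖x - y‖ with hv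
  have hnorm : ‖v‖ = ‖x - y‖ := by
    rw [hv, EuclideanSpace.norm_single, norm_norm]
  set R := Submodule.reflection (ℝ ∙ (v - (x - y)))ᗮ with hRdef
  have hR : R v = x - y := Submodule.reflection_sub hnorm
  have hmeas : MeasurableSet (Metric.closedBall x ε ∪ Metric.closedBall y ε) :=
    measurableSet_closedBall.union measurableSet_closedBall
  have step1 : volume ((fun z : EuclideanSpace ℝ (Fin (m+1)) => z + y) ⁻¹'
      (Metric.closedBall x ε ∪ Metric.closedBall y ε))
      = volume (Metric.closedBall x ε ∪ Metric.closedBall y ε) :=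
    measure_preimage_add_right volume y _
  have hpre1 : (fun z : EuclideanSpace ℝ (Fin (m+1)) => z + y) ⁻¹'
      (Metric.closedBall x ε ∪ Metric.closedBall y ε)
      = Metric.closedBall (x - y) ε ∪ Metric.closedBall 0 ε := by
    ext z
    simp only [Set.mem_preimage, Set.mem_union, Metric.mem_closedBall, dist_eq_norm]
    constructor
    · rintro (h | h)
      · left; convert h using 2; abel
      · right; convert h using 2; abel
    · rintro (h | h)
      · left; convert h using 2; abel
      · right; convert h using 2; abel
  have step2 : volume ((⇑R) ⁻¹' (Metric.closedBall (x - y) ε ∪ Metric.closedBall 0 ε))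
      = volume (Metric.closedBall (x - y) ε ∪ Metric.closedBall 0 ε) :=
    R.measurePreserving.measure_preimage
      (measurableSet_closedBall.union measurableSet_closedBall).nullMeasurableSet
  have hpre2 : (⇑R) ⁻¹' (Metric.closedBall (x - y) ε ∪ Metric.closedBall 0 ε)
      = Metric.closedBall v ε ∪ Metric.closedBall 0 ε := by
    ext z
    simp only [Set.mem_preimage, Set.mem_union, Metric.mem_closedBall]
    have e1 : dist (R z) (x - y) = dist z v := by
      rw [← hR]
      exact R.dist_map z v
    have e2 : dist (R z) 0 = dist z 0 := by
      calc dist (R z) 0 = dist (R z) (R 0) := by rw [map_zero]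
        _ = dist z 0 := R.dist_map z 0
    rw [e1, e2]
  rw [← step1, hpre1, ← step2, hpre2, Set.union_comm]

lemma euclidean_single_zero (m : ℕ) :
    EuclideanSpace.single (0 : Fin (m+1)) (0:ℝ) = 0 := by
  ext j
  simp [EuclideanSpace.single_apply]

end Aux

/-- The Euclidean model case of the ε-ball-tube volume formula (Lemma 1.4):
the volume of the union of two overlapping ε-balls. -/
theorem volume_union_two_balls (n : ℕ) (hn : 1 ≤ n) (ε : ℝ) (hε : 0 < ε)
    (x y : EuclideanSpace ℝ (Fin n)) (hxy0 : 0 < ‖x - y‖) (hxy : ‖x - y‖ ≤ 2 * ε) :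
    volume (Metric.closedBall x ε ∪ Metric.closedBall y ε) =
      volume (Metric.closedBall x ε) +
        ENNReal.ofReal
            (2 * ε * ∫ t in Real.arccos (‖x - y‖ / (2 * ε))..(π / 2), Real.sin t ^ n) *
          volume (Metric.closedBall (0 : EuclideanSpace ℝ (Fin (n - 1))) ε) := by
  obtain ⟨m, rfl⟩ : ∃ m, n = m + 1 := ⟨n - 1, (Nat.succ_pred_eq_of_pos hn).symm⟩
  show volume (Metric.closedBall x ε ∪ Metric.closedBall y ε) =
      volume (Metric.closedBall x ε) +
        ENNReal.ofReal
            (2 * ε * ∫ t in Real.arccos (‖x - y‖ / (2 * ε))..(π / 2), Real.sin t ^ (m+1)) *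
          volume (Metric.closedBall (0 : EuclideanSpace ℝ (Fin m)) ε)
  have hd0 : 0 ≤ ‖x - y‖ := norm_nonneg _
  have hθ2 : Real.arccos (‖x - y‖/(2*ε)) ≤ π / 2 :=
    Real.arccos_le_pi_div_two.mpr (div_nonneg hd0 (by linarith))
  have hθ0 : 0 ≤ Real.arccos (‖x - y‖/(2*ε)) := Real.arccos_nonneg _
  have hInn : 0 ≤ ∫ t in Real.arccos (‖x - y‖/(2*ε))..(π/2), Real.sin t ^ (m+1) := by
    apply intervalIntegral.integral_nonneg hθ2
    intro t ht
    have hsin : 0 ≤ Real.sin t := Real.sin_nonneg_of_nonneg_of_le_pi (le_trans hθ0 ht.1)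
      (le_trans ht.2 (by linarith [Real.pi_pos]))
    positivity
  rcases Nat.eq_zero_or_pos m with rfl | hm
  · -- dimension 1
    have hproj : MeasurePreserving (fun z : EuclideanSpace ℝ (Fin 1) =>
        (MeasurableEquiv.funUnique (Fin 1) ℝ) (((MeasurableEquiv.toLp 2 (Fin 1 → ℝ)).symm) z))
        volume volume :=
      (MeasureTheory.volume_preserving_funUnique (Fin 1) ℝ).comp
        (EuclideanSpace.volume_preserving_symm_measurableEquiv_toLp (Fin 1))
    have hg : ∀ z : EuclideanSpace ℝ (Fin 1),
        (MeasurableEquiv.funUnique (Fin 1) ℝ) (((MeasurableEquiv.toLp 2 (Fin 1 → ℝ)).symm) z)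
          = z 0 := fun z => rfl
    have hprecb : ∀ w : EuclideanSpace ℝ (Fin 1),
        Metric.closedBall w ε = (fun z : EuclideanSpace ℝ (Fin 1) =>
          (MeasurableEquiv.funUnique (Fin 1) ℝ) (((MeasurableEquiv.toLp 2 (Fin 1 → ℝ)).symm) z))
            ⁻¹' (Metric.closedBall (w 0) ε) := by
      intro w
      ext z
      simp only [Set.mem_preimage, Metric.mem_closedBall, hg z]
      rw [EuclideanSpace.dist_eq, Fin.sum_univ_one, Real.sqrt_sq dist_nonneg]
    have hd1 : ‖x - y‖ = |x 0 - y 0| := by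
      rw [EuclideanSpace.norm_eq, Fin.sum_univ_one,
        show (x - y) 0 = x 0 - y 0 from rfl, Real.norm_eq_abs, sq_abs, Real.sqrt_sq_eq_abs]
    have habs := abs_le.mp (hd1 ▸ hxy : |x 0 - y 0| ≤ 2 * ε)
    have hunion : volume (Metric.closedBall x ε ∪ Metric.closedBall y ε)
        = ENNReal.ofReal (‖x - y‖ + 2 * ε) := by
      rw [hprecb x, hprecb y, ← Set.preimage_union,
        hproj.measure_preimage (measurableSet_closedBall.union
          measurableSet_closedBall).nullMeasurableSet,
        Real.closedBall_eq_Icc, Real.closedBall_eq_Icc,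
        Set.Icc_union_Icc' (by linarith [habs.1, habs.2]) (by linarith [habs.1, habs.2]),
        Real.volume_Icc]
      congr 1
      rcases le_total (x 0) (y 0) with h | h
      · rw [min_eq_left (by linarith), max_eq_right (by linarith), hd1,
          abs_of_nonpos (by linarith)]
        ring
      · rw [min_eq_right (by linarith), max_eq_left (by linarith), hd1,
          abs_of_nonneg (by linarith)]
        ring
    have hball : volume (Metric.closedBall x ε) = ENNReal.ofReal (2 * ε) := by
      rw [hprecb x, hproj.measure_preimage measurableSet_closedBall.nullMeasurableSet,
        Real.volume_closedBall]
    have hV0 : volume (Metric.closedBall (0 : EuclideanSpace ℝ (Fin 0)) ε) = 1 := by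
      rw [volume_euclideanSpace_eq_dirac, Measure.dirac_apply_of_mem
        (Metric.mem_closedBall_self hε.le)]
    have hint : ∫ t in Real.arccos (‖x - y‖/(2*ε))..(π/2), Real.sin t ^ (0+1)
        = ‖x - y‖ / (2*ε) := by
      simp only [zero_add, pow_one, integral_sin, Real.cos_pi_div_two, sub_zero]
      refine Real.cos_arccos ?_ ((div_le_one (by linarith)).mpr hxy)
      have : 0 ≤ ‖x - y‖ / (2*ε) := div_nonneg hd0 (by linarith)
      linarith
    rw [hunion, hball, hV0, hint, mul_one,
      show 2 * ε * (‖x - y‖ / (2 * ε)) = ‖x - y‖ by field_simp,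
      ← ENNReal.ofReal_add (by linarith) hd0]
    congr 1
    ring
  · -- dimension at least 2
    rw [vol_union_reduce m ε x y, vol_union_aux m hm ε ‖x - y‖ hε hd0]
    have hballc : volume (Metric.closedBall x ε)
        = ENNReal.ofReal (2 * ∫ s in (-ε)..(0:ℝ), Real.sqrt (ε^2 - s^2) ^ m)
            * volume (Metric.closedBall (0 : EuclideanSpace ℝ (Fin m)) 1) := by
      have h0 := vol_union_aux m hm ε 0 hε le_rfl
      rw [euclidean_single_zero, Set.union_self] at h0
      rw [Measure.addHaar_closedBall_center volume x, h0]
      norm_num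
    have hVm : volume (Metric.closedBall (0 : EuclideanSpace ℝ (Fin m)) ε)
        = ENNReal.ofReal (ε ^ m)
            * volume (Metric.closedBall (0 : EuclideanSpace ℝ (Fin m)) 1) := by
      rw [Measure.addHaar_closedBall' volume _ hε.le, finrank_euclideanSpace_fin]
    rw [hballc, hVm, ← mul_assoc,
      ← ENNReal.ofReal_mul (mul_nonneg (by linarith) hInn), ← add_mul]
    congr 1
    rw [← ENNReal.ofReal_add
      (by
        have : 0 ≤ ∫ s in (-ε)..(0:ℝ), Real.sqrt (ε^2 - s^2) ^ m :=
          intervalIntegral.integral_nonneg (by linarith) (fun s _ => by positivity)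
        linarith)
      (mul_nonneg (mul_nonneg (by linarith) hInn) (pow_nonneg hε.le m))]
    congr 1
    have hsplit : ∫ s in (-ε)..(‖x - y‖/2), Real.sqrt (ε^2 - s^2) ^ m
        = (∫ s in (-ε)..(0:ℝ), Real.sqrt (ε^2 - s^2) ^ m)
            + ∫ s in (0:ℝ)..(‖x - y‖/2), Real.sqrt (ε^2 - s^2) ^ m :=
      (intervalIntegral.integral_add_adjacent_intervals
        ((((continuous_const.sub (continuous_pow 2)).sqrt).pow m).intervalIntegrable _ _)
        ((((continuous_const.sub (continuous_pow 2)).sqrt).pow m).intervalIntegrable _ _)).symm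
    rw [hsplit, tube_subst m ε ‖x - y‖ hε hd0 hxy]
    ring
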